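/- arXiv:2001.03797 — 3 statements merged into one kernel-verified Lean document; each statement's English description precedes it below -/
import Mathlib

section
/- Let G be a finite group with g_k(G) ≥ N and k ≥ 2. Suppose there is a short exact sequence 1 → C → G → G' → 1 where C is cyclic. Then g_{k-1}(G') ≥ N. -/
/-- The rank of a group: the minimal cardinality of a (finite) generating set.
By convention (following the paper) it is at least 1. -/
noncomputable def grpRank (G : Type*) [Group G] : ℕ :=
  max 1 (sInf {n | ∃ S : Finset G, S.card = n ∧ Subgroup.closure (S : Set G) = ⊤})

/-- `rN G N` is the minimum rank among subgroups of `G` of index at most `N`. -/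
noncomputable def rN (G : Type*) [Group G] (N : ℕ) : ℕ :=
  sInf {r | ∃ H : Subgroup G, H.index ≤ N ∧ grpRank H = r}

/-- `gGe G k N` expresses the inequality `g_k(G) ≥ N` for the k-generation order:
`|G| ≥ N` and every subgroup of index at most `N` has rank at least `k`. -/
def gGe (G : Type*) [Group G] (k N : ℕ) : Prop :=
  N ≤ Nat.card G ∧ k ≤ rN G N

lemma grpRank_cyclic_le_one (G : Type*) [Group G] (h : IsCyclic G) : grpRank G ≤ 1 := by
  obtain ⟨g, hg⟩ := h.exists_generator
  have hcl : Subgroup.closure (({g} : Finset G) : Set G) = ⊤ := by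
    rw [Finset.coe_singleton, ← Subgroup.zpowers_eq_closure]
    ext x; simpa using hg x
  have : sInf {n | ∃ S : Finset G, S.card = n ∧ Subgroup.closure (S : Set G) = ⊤} ≤ 1 :=
    Nat.sInf_le ⟨{g}, Finset.card_singleton g, hcl⟩
  simpa [grpRank] using this

lemma grpRank_le_of_surj {A B : Type*} [Group A] [Group B] [Finite B] (f : A →* B)
    (hf : Function.Surjective f) (hker : IsCyclic f.ker) :
    grpRank A ≤ grpRank B + 1 := by
  classical
  set SB := {n | ∃ S : Finset B, S.card = n ∧ Subgroup.closure (S : Set B) = ⊤} with hSB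
  have hne : SB.Nonempty := by
    haveI := Fintype.ofFinite B
    exact ⟨(Finset.univ : Finset B).card, Finset.univ, rfl, by simp⟩
  obtain ⟨S, hScard, hScl⟩ := Nat.sInf_mem hne
  obtain ⟨c, hc⟩ := hker.exists_generator
  set g := Function.surjInv hf with hg
  set T : Finset A := insert (c : A) (S.image g) with hT
  have hkerle : (f.ker : Set A) ⊆ (Subgroup.closure (T : Set A) : Set A) := by
    intro x hx
    obtain ⟨m, hm⟩ := hc ⟨x, hx⟩
    have : ((c : A)) ^ m = x := by
      have := congrArg (Subtype.val) hm
      simpa using this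
    rw [← this]
    exact zpow_mem (Subgroup.subset_closure (by simp [hT])) m
  have hmap : Subgroup.map f (Subgroup.closure (T : Set A)) = ⊤ := by
    rw [MonoidHom.map_closure]
    rw [eq_top_iff, ← hScl]
    apply Subgroup.closure_mono
    intro s hs
    exact ⟨g s, by simp [hT]; exact Or.inr ⟨s, hs, rfl⟩, Function.surjInv_eq hf s⟩
  have hTcl : Subgroup.closure (T : Set A) = ⊤ := by
    have h1 : Subgroup.comap f (Subgroup.map f (Subgroup.closure (T : Set A)))
        = Subgroup.closure (T : Set A) ⊔ f.ker := Subgroup.comap_map_eq f _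
    rw [hmap] at h1
    have h2 : Subgroup.comap f (⊤ : Subgroup B) = ⊤ := rfl
    rw [h2] at h1
    rw [h1]
    exact (sup_eq_left.mpr (fun x hx => hkerle hx)).symm
  have hA : sInf {n | ∃ S : Finset A, S.card = n ∧ Subgroup.closure (S : Set A) = ⊤}
      ≤ S.card + 1 := by
    refine le_trans (Nat.sInf_le ⟨T, rfl, hTcl⟩) ?_
    calc T.card ≤ (S.image g).card + 1 := Finset.card_insert_le _ _
      _ ≤ S.card + 1 := by simpa using Nat.add_le_add_right (Finset.card_image_le) 1
  have h1 : sInf SB ≤ grpRank B := le_max_right _ _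
  have hA2 : grpRank A ≤ S.card + 1 := max_le (by omega) hA
  omega

/-- If `g_k(G) ≥ N` with `k ≥ 2` and `C ⊴ G` is cyclic, then `g_{k-1}(G/C) ≥ N`. -/
theorem k_generation_under_cyclic_quotient (G : Type*) [Group G] [Finite G] (k N : ℕ)
    (hk : 2 ≤ k) (C : Subgroup G) [C.Normal] (hcyc : IsCyclic C)
    (hG : gGe G k N) :
    gGe (G ⧸ C) (k - 1) N := by
  classical
  obtain ⟨hcard, hrN⟩ := hG
  -- every subgroup of index ≤ N has grpRank ≥ k
  have key : ∀ H : Subgroup G, H.index ≤ N → k ≤ grpRank H := fun H hH =>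
    le_trans hrN (Nat.sInf_le ⟨H, hH, rfl⟩)
  -- Part 1 : N ≤ card (G⧸C)
  have hNle : N ≤ Nat.card (G ⧸ C) := by
    by_contra h
    push_neg at h
    have hCidx : C.index ≤ N := by
      have : C.index = Nat.card (G ⧸ C) := rfl
      omega
    have := key C hCidx
    have := grpRank_cyclic_le_one C hcyc
    omega
  refine ⟨hNle, ?_⟩
  -- N ≥ 1
  have hN1 : 1 ≤ N := by
    by_contra h
    push_neg at h
    interval_cases N
    have : rN G 0 = 0 := by
      have : {r | ∃ H : Subgroup G, H.index ≤ 0 ∧ grpRank H = r} = ∅ := by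
        ext r
        simp only [Set.mem_setOf_eq, Set.mem_empty_iff_false, iff_false, not_exists]
        rintro H ⟨h0, -⟩
        exact absurd (Nat.le_zero.mp h0) (Subgroup.index_ne_zero_of_finite)
      rw [rN, this, Nat.sInf_empty]
    omega
  -- Part 2
  have hSne : {r | ∃ H : Subgroup (G ⧸ C), H.index ≤ N ∧ grpRank H = r}.Nonempty :=
    ⟨grpRank (⊤ : Subgroup (G ⧸ C)), ⊤, by simpa [Subgroup.index_top] using hN1, rfl⟩
  refine le_csInf hSne ?_
  rintro r ⟨H', hH', rfl⟩
  set π := QuotientGroup.mk' C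
  set H := H'.comap π with hH
  have hidx : H.index = H'.index := H'.index_comap_of_surjective (QuotientGroup.mk'_surjective C)
  have hkH : k ≤ grpRank H := key H (by rw [hidx]; exact hH')
  -- C ≤ H
  have hCH : C ≤ H := by
    intro x hx
    have h2 : π x = 1 := by
      rwa [← MonoidHom.mem_ker, QuotientGroup.ker_mk']
    show π x ∈ H'
    rw [h2]
    exact H'.one_mem
  -- surjection H → H'
  let f : H →* H' := ((π.comp H.subtype)).codRestrict H' (fun x => x.2)
  have hfsurj : Function.Surjective f := by
    rintro ⟨y, hy⟩
    obtain ⟨x, hx⟩ := QuotientGroup.mk'_surjective C y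
    refine ⟨⟨x, ?_⟩, ?_⟩
    · show (QuotientGroup.mk' C) x ∈ H'; rw [hx]; exact hy
    · apply Subtype.ext; exact hx
  have hker : f.ker = C.subgroupOf H := by
    ext x
    simp only [MonoidHom.mem_ker, Subgroup.mem_subgroupOf]
    constructor
    · intro hx
      have h2 : π (x : G) = 1 := congrArg Subtype.val hx
      have h3 : (x : G) ∈ (QuotientGroup.mk' C).ker := MonoidHom.mem_ker.mpr h2
      rwa [QuotientGroup.ker_mk'] at h3
    · intro hx
      apply Subtype.ext
      show π (x : G) = 1
      rwa [← MonoidHom.mem_ker, QuotientGroup.ker_mk']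
  have hkercyc : IsCyclic f.ker := by
    rw [hker]
    exact isCyclic_of_surjective _ (Subgroup.subgroupOfEquivOfLe hCH).symm.surjective
  have := grpRank_le_of_surj f hfsurj hkercyc
  omega
end

section
/- Let 1 → T → E → Q → 1 be a group extension where T is abelian and every element of Q has order dividing h. Let G ≤ E be a finite subgroup containing an abelian normal subgroup A_0 of index at most J. Set l = h·J (or any common multiple of h and all indices involved, e.g., l = h!·J). Then the subgroup G^l generated by l-th powers of elements of G is contained in T ∩ G, is abelian, is characteristic in G, and has index at most l^r·J in G, where r is the rank of A_0. -/
open scoped Pointwise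

/-- The subgroup of `G` generated by all `l`-th powers of elements of `G`. -/
def powSubgroup (G : Type*) [Group G] (l : ℕ) : Subgroup G :=
  Subgroup.closure {x : G | ∃ g : G, g ^ l = x}


/-- card of closure of a finite set in a comm group of exponent dividing l. -/
lemma card_closure_le_pow {Q : Type*} [CommGroup Q] (l : ℕ) (hl0 : 0 < l)
    (hexp : ∀ q : Q, q ^ l = 1) (S : Finset Q) :
    Nat.card (Subgroup.closure (S : Set Q)) ≤ l ^ S.card := by
  classical
  induction S using Finset.induction with
  | empty =>
      simp only [Finset.coe_empty, Subgroup.closure_empty, Finset.card_empty, pow_zero,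
        Subgroup.card_bot, le_refl]
  | @insert a S ha ih =>
      rw [Finset.coe_insert, Set.insert_eq, Subgroup.closure_union,
        Finset.card_insert_of_notMem ha, pow_succ, mul_comm (l ^ S.card) l]
      calc Nat.card (Subgroup.closure {a} ⊔ Subgroup.closure (S : Set Q) : Subgroup Q)
          = Nat.card ((Subgroup.closure {a} : Set Q) * (Subgroup.closure (S : Set Q) : Set Q)) := by
            rw [← Subgroup.mul_normal]; rfl
        _ ≤ Nat.card (Subgroup.closure {a} : Set Q) *
              Nat.card (Subgroup.closure (S : Set Q) : Set Q) := Set.natCard_mul_le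
        _ ≤ l * l ^ S.card := by
            apply Nat.mul_le_mul _ ih
            rw [← Subgroup.zpowers_eq_closure]
            rw [show Nat.card (Subgroup.zpowers a : Set Q) = Nat.card (Subgroup.zpowers a) from rfl,
              Nat.card_zpowers]
            exact Nat.le_of_dvd hl0 (orderOf_dvd_of_pow_eq_one (hexp a))

lemma relindex_le_pow_card {G : Type*} [Group G] [Finite G] (A : Subgroup G)
    (hcomm : ∀ x y : A, x * y = y * x) (S : Finset G)
    (hS : Subgroup.closure (S : Set G) = A) (l : ℕ) (hl0 : 0 < l)
    (K : Subgroup G) (hK : ∀ a : A, (a : G) ^ l ∈ K) :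
    K.relIndex A ≤ l ^ S.card := by
  classical
  subst hS
  set A := Subgroup.closure (S : Set G) with hA
  letI : CommGroup A := { (inferInstance : Group A) with mul_comm := hcomm }
  set L : Subgroup A := K.subgroupOf A with hL
  let π : A →* A ⧸ L := QuotientGroup.mk' L
  have hexp : ∀ q : A ⧸ L, q ^ l = 1 := by
    intro q
    induction q using QuotientGroup.induction_on with
    | H a =>
      rw [← QuotientGroup.mk_pow, QuotientGroup.eq_one_iff]
      exact hK a
  -- generating set of the quotient
  have hs0 : Subgroup.closure (((↑) : A → G) ⁻¹' (S : Set G)) = ⊤ :=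
    Subgroup.closure_closure_coe_preimage
  set s0 : Set A := ((↑) : A → G) ⁻¹' (S : Set G) with hs0def
  have hsur : Function.Surjective π := QuotientGroup.mk'_surjective L
  have hclos : Subgroup.closure (π '' s0) = ⊤ := by
    rw [← MonoidHom.map_closure, hs0, ← MonoidHom.range_eq_map, 
      MonoidHom.range_eq_top_of_surjective π hsur]
  haveI : Fintype (A ⧸ L) := Fintype.ofFinite _
  haveI : Fintype (A ⧸ L) := Fintype.ofFinite _
  set F : Finset (A ⧸ L) := (π '' s0).toFinset with hF
  have hFcoe : (F : Set (A ⧸ L)) = π '' s0 := Set.coe_toFinset _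
  have hcard : Nat.card (A ⧸ L) ≤ l ^ F.card := by
    have := card_closure_le_pow l hl0 hexp F
    rwa [hFcoe, hclos, Subgroup.card_top] at this
  have hFle : F.card ≤ S.card := by
    have h1 : F.card = Nat.card (π '' s0) := by
      rw [hF, Set.toFinset_card, Nat.card_eq_fintype_card]
    have h2 : Nat.card (π '' s0) ≤ Nat.card s0 := Nat.card_image_le (Set.toFinite s0)
    have h3 : Nat.card s0 ≤ Nat.card (S : Set G) := by
      have : Nat.card s0 = Nat.card (((↑) : A → G) '' s0) :=
        (Nat.card_image_of_injective Subtype.val_injective s0).symm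
      rw [this]
      exact Nat.card_mono (Set.toFinite _) (Set.image_preimage_subset _ _)
    have h4 : Nat.card (S : Set G) = S.card := by rw [Nat.card_coe_set_eq, Set.ncard_coe_finset]
    omega
  have : K.relIndex A = Nat.card (A ⧸ L) := rfl
  rw [this]
  exact hcard.trans (Nat.pow_le_pow_right hl0 hFle)

/-- Let `1 → T → E → Q → 1` be a group extension with `T` abelian and `Q` of exponent
dividing `h`. Let `G ≤ E` be finite with an abelian normal subgroup `A₀` of rank `r` and
index at most `J`, and let `l` be a common multiple of `h` and the index of `A₀` (e.g.
`l = h!·J`). Then `G^l` is contained in `T`, contained in `A₀` (hence abelian), is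
characteristic in `G`, and has index at most `l^r · J` in `G`. -/
theorem power_subgroup_in_extension (E : Type*) [Group E] (T : Subgroup E) [T.Normal]
    (hT : ∀ x y : T, x * y = y * x)
    (h J r l : ℕ) (hQ : ∀ q : E ⧸ T, q ^ h = 1)
    (G : Subgroup E) [Finite G]
    (A0 : Subgroup G) [A0.Normal]
    (hA0comm : ∀ x y : A0, x * y = y * x)
    (hA0rank : ∃ S : Finset G, S.card = r ∧ Subgroup.closure (S : Set (G : Type _)) = A0)
    (hJ : A0.index ≤ J)
    (hl0 : 0 < l) (hlh : h ∣ l) (hlA : A0.index ∣ l) :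
    (∀ x : G, x ∈ powSubgroup G l → (x : E) ∈ T) ∧
    powSubgroup G l ≤ A0 ∧
    (∀ x y : powSubgroup G l, x * y = y * x) ∧
    (powSubgroup G l).Characteristic ∧
    (powSubgroup G l).index ≤ l ^ r * J := by
  classical
  -- every l-th power lands in T
  have hTpow : ∀ g : G, ((g : E)) ^ l ∈ T := by
    intro g
    obtain ⟨c, rfl⟩ := hlh
    have : ((g : E) : E ⧸ T) ^ (h * c) = 1 := by
      rw [pow_mul, hQ, one_pow]
    rwa [← QuotientGroup.mk_pow, QuotientGroup.eq_one_iff] at this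
  -- every l-th power lands in A0
  have hApow : ∀ g : G, g ^ l ∈ A0 := by
    intro g
    obtain ⟨c, rfl⟩ := hlA
    rw [pow_mul]
    exact Subgroup.pow_mem _ (A0.pow_index_mem g) c
  have hmemT : ∀ x : G, x ∈ powSubgroup G l → (x : E) ∈ T := by
    intro x hx
    have : powSubgroup G l ≤ T.comap G.subtype := by
      apply Subgroup.closure_le _ |>.mpr
      rintro y ⟨g, rfl⟩
      simpa [Subgroup.mem_comap, Subgroup.mem_subgroupOf] using hTpow g
    exact this hx
  have hKA : powSubgroup G l ≤ A0 := by
    apply Subgroup.closure_le _ |>.mpr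
    rintro y ⟨g, rfl⟩
    exact hApow g
  refine ⟨hmemT, hKA, ?_, ?_, ?_⟩
  · intro x y
    have := hA0comm ⟨x.1, hKA x.2⟩ ⟨y.1, hKA y.2⟩
    have h2 : (x : G) * (y : G) = (y : G) * (x : G) := congrArg Subtype.val this
    exact Subtype.ext h2
  · rw [Subgroup.characteristic_iff_map_le]
    intro φ
    rw [show powSubgroup G l = Subgroup.closure {x : G | ∃ g : G, g ^ l = x} from rfl,
      MonoidHom.map_closure]
    apply Subgroup.closure_mono
    rintro y ⟨x, ⟨g, rfl⟩, rfl⟩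
    exact ⟨φ g, by simp⟩
  · obtain ⟨S, hScard, hSclos⟩ := hA0rank
    have h1 : (powSubgroup G l).relIndex A0 ≤ l ^ r := by
      rw [← hScard]
      refine relindex_le_pow_card A0 hA0comm S hSclos l hl0 _ ?_
      intro a
      exact Subgroup.subset_closure ⟨(a : G), rfl⟩
    calc (powSubgroup G l).index
        = (powSubgroup G l).relIndex A0 * A0.index :=
          (Subgroup.relIndex_mul_index hKA).symm
      _ ≤ l ^ r * J := Nat.mul_le_mul h1 hJ
end

section
/- Let Λ ⊆ [0,1] ∩ Q be a set satisfying the descending chain condition. Then the set H(Λ) = {1 - (1-λ)/m : λ ∈ Λ, m ∈ Z_{>0}} ∪ Λ also satisfies the descending chain condition, and its accumulation points are contained in {1 - (1-λ')/m : λ' an accumulation point of Λ ∪ {1}, m ∈ Z_{>0}} ∪ {1}; in particular if Λ has rational accumulation points then so does H(Λ). -/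
/-- A set of rationals satisfies the descending chain condition if it contains no
strictly decreasing infinite sequence. -/
def DCCSet (S : Set ℚ) : Prop := ∀ f : ℕ → ℚ, (∀ n, f n ∈ S) → ¬ StrictAnti f

/-- `x` is an accumulation point of the set `S ⊆ ℝ`. -/
def IsAccumPt (S : Set ℝ) (x : ℝ) : Prop :=
  ∀ ε : ℝ, 0 < ε → ∃ y ∈ S, y ≠ x ∧ |y - x| < ε

lemma exists_strictMono_mem {s : Set ℕ} (hs : s.Infinite) :
    ∃ φ : ℕ → ℕ, StrictMono φ ∧ ∀ n, φ n ∈ s := by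
  have h : ∀ a : ℕ, ∃ b ∈ s, a < b := hs.exists_gt
  choose g hg hlt using h
  refine ⟨fun n => Nat.rec (g 0) (fun _ p => g p) n, strictMono_nat_of_lt_succ ?_, ?_⟩
  · intro n; exact hlt _
  · intro n; cases n <;> exact hg _

lemma dcc_part (Λ : Set ℚ) (hsub : Λ ⊆ Set.Icc 0 1) (hdcc : DCCSet Λ) :
    DCCSet ({x : ℚ | ∃ l ∈ Λ, ∃ m : ℕ, 0 < m ∧ x = 1 - (1 - l) / (m : ℚ)} ∪ Λ) := by
  intro f hf hanti
  have hrep : ∀ n, ∃ l, l ∈ Λ ∧ ∃ m : ℕ, 0 < m ∧ f n = 1 - (1 - l) / (m : ℚ) := by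
    intro n
    rcases hf n with h | h
    · obtain ⟨l, hl, m, hm, he⟩ := h; exact ⟨l, hl, m, hm, he⟩
    · exact ⟨f n, h, 1, one_pos, by norm_num⟩
  choose l hl m hm he using hrep
  -- g n := 1 - f n is strictly increasing and g 1 > 0
  have hg0 : (0:ℚ) ≤ 1 - f 0 := by
    have h0 : (1 - l 0) / (m 0 : ℚ) ≥ 0 := by
      apply div_nonneg
      · linarith [(hsub (hl 0)).2]
      · positivity
    rw [he 0]; linarith
  have hg1 : (0:ℚ) < 1 - f 1 := by
    have := hanti (show (0:ℕ) < 1 by norm_num)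
    linarith
  -- bound on m (n+1)
  set M : ℕ := ⌈(1 / (1 - f 1) : ℚ)⌉₊ with hM
  have hmb : ∀ n, m (n+1) ≤ M := by
    intro n
    have hgn : 1 - f 1 ≤ 1 - f (n+1) := by
      have := hanti.antitone (show 1 ≤ n+1 by omega); linarith
    have hml : (m (n+1) : ℚ) * (1 - f (n+1)) ≤ 1 := by
      have : (1 - f (n+1)) = (1 - l (n+1)) / (m (n+1) : ℚ) := by rw [he (n+1)]; ring
      rw [this]
      have hmpos : (0:ℚ) < (m (n+1) : ℚ) := by exact_mod_cast hm (n+1)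
      rw [mul_div_cancel₀ _ (ne_of_gt hmpos)]
      linarith [(hsub (hl (n+1))).1]
    have h1 : (m (n+1) : ℚ) ≤ 1 / (1 - f 1) := by
      rw [le_div_iff₀ hg1]
      calc (m (n+1) : ℚ) * (1 - f 1) ≤ (m (n+1) : ℚ) * (1 - f (n+1)) := by
            apply mul_le_mul_of_nonneg_left hgn; positivity
        _ ≤ 1 := hml
    have h2 : (m (n+1) : ℚ) ≤ (M : ℚ) := h1.trans (Nat.le_ceil _)
    exact_mod_cast h2
  -- pigeonhole
  have hlt : ∀ n, m (n+1) < M + 1 := fun n => Nat.lt_succ_of_le (hmb n)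
  obtain ⟨m₀, hfib⟩ := Finite.exists_infinite_fiber (fun n : ℕ => (⟨m (n+1), hlt n⟩ : Fin (M+1)))
  have hfib' : Set.Infinite ((fun n : ℕ => (⟨m (n+1), hlt n⟩ : Fin (M+1))) ⁻¹' {m₀}) :=
    Set.infinite_coe_iff.mp hfib
  obtain ⟨φ, hφmono, hφmem⟩ := exists_strictMono_mem hfib'
  have hmeq : ∀ n, m (φ n + 1) = (m₀ : ℕ) := by
    intro n
    have := hφmem n
    simpa [Set.mem_preimage, Fin.ext_iff] using this
  have hm₀pos : 0 < (m₀ : ℕ) := by rw [← hmeq 0]; exact hm _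
  -- the subsequence of l's is strictly decreasing
  apply hdcc (fun n => l (φ n + 1)) (fun n => hl _)
  intro a b hab
  have hfab : f (φ b + 1) < f (φ a + 1) := hanti (by have := hφmono hab; omega)
  have hm₀pos' : (0:ℚ) < ((m₀ : ℕ) : ℚ) := by exact_mod_cast hm₀pos
  have ha' := he (φ a + 1); have hb' := he (φ b + 1)
  rw [hmeq a] at ha'; rw [hmeq b] at hb'
  rw [ha', hb'] at hfab
  have : (1 - l (φ a + 1)) / ((m₀:ℕ):ℚ) < (1 - l (φ b + 1)) / ((m₀:ℕ):ℚ) := by linarith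
  have := (div_lt_div_iff_of_pos_right hm₀pos').mp this
  linarith

lemma accum_part (Λ : Set ℚ) (hsub : Λ ⊆ Set.Icc 0 1) :
    ∀ x : ℝ, IsAccumPt
        ((fun q : ℚ => (q : ℝ)) ''
          ({x : ℚ | ∃ l ∈ Λ, ∃ m : ℕ, 0 < m ∧ x = 1 - (1 - l) / (m : ℚ)} ∪ Λ)) x →
      x = 1 ∨ ∃ l' : ℝ, IsAccumPt ((fun q : ℚ => (q : ℝ)) '' (Λ ∪ {1})) l' ∧
        ∃ m : ℕ, 0 < m ∧ x = 1 - (1 - l') / (m : ℝ) := by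
  intro x hacc
  by_cases hx : x = 1
  · exact Or.inl hx
  right
  set d : ℝ := |x - 1| with hd
  have hd0 : 0 < d := abs_pos.mpr (sub_ne_zero.mpr hx)
  have hstep : ∀ k : ℕ, ∃ (l : ℚ) (m : ℕ), l ∈ Λ ∧ 0 < m ∧
      ((1 - (1 - (l:ℝ))/m) ≠ x) ∧ |(1 - (1 - (l:ℝ))/m) - x| < min (d/2) (1/(k+1)) := by
    intro k
    have hε : (0:ℝ) < min (d/2) (1/(k+1)) := by positivity
    obtain ⟨y, hy, hne, hlt⟩ := hacc _ hε
    obtain ⟨q, hq, rfl⟩ := hy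
    rcases hq with hq | hq
    · obtain ⟨l, hl, m, hm, heq⟩ := hq
      have hcast : ((q:ℝ)) = 1 - (1 - (l:ℝ))/m := by rw [heq]; push_cast; ring
      exact ⟨l, m, hl, hm, by rw [← hcast]; exact hne, by rw [← hcast]; exact hlt⟩
    · have hcast : ((q:ℝ)) = 1 - (1 - (q:ℝ))/(1:ℕ) := by push_cast; ring
      exact ⟨q, 1, hq, one_pos, by rw [← hcast]; exact hne, by rw [← hcast]; exact hlt⟩
  choose L Mf hL hMpos hne hltk using hstep
  -- bound Mf
  set M : ℕ := ⌈(2/d : ℝ)⌉₊ with hM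
  have hMb : ∀ k, Mf k < M + 1 := by
    intro k
    set y : ℝ := 1 - (1 - (L k : ℝ))/(Mf k) with hy
    have hmpos : (0:ℝ) < (Mf k : ℝ) := by exact_mod_cast hMpos k
    have h1 : |y - x| < d/2 := lt_of_lt_of_le (hltk k) (min_le_left _ _)
    have h2 : d/2 < |y - 1| := by
      have : d ≤ |x - y| + |y - 1| := by
        have := abs_sub_le x y 1; simpa [hd] using this
      have : d ≤ |y - x| + |y - 1| := by rwa [abs_sub_comm x y] at this
      linarith
    have h3 : |y - 1| ≤ 1 / (Mf k : ℝ) := by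
      have hl1 : (L k : ℝ) ≤ 1 := by exact_mod_cast (hsub (hL k)).2
      have hl0 : (0:ℝ) ≤ (L k : ℝ) := by exact_mod_cast (hsub (hL k)).1
      have hy1 : y - 1 = -((1 - (L k : ℝ))/(Mf k)) := by rw [hy]; ring
      rw [hy1, abs_neg, abs_of_nonneg (div_nonneg (by linarith) hmpos.le)]
      gcongr <;> linarith
    have h4 : (Mf k : ℝ) < 2/d := by
      have hlt2 : d/2 < 1/(Mf k : ℝ) := h2.trans_le h3
      rw [div_lt_div_iff₀ (by norm_num : (0:ℝ) < 2) hmpos] at hlt2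
      rw [lt_div_iff₀ hd0]
      nlinarith
    have h5 : (Mf k : ℝ) < (M:ℝ) + 1 := by
      have := Nat.le_ceil (2/d : ℝ)
      rw [hM]; push_cast; linarith
    exact_mod_cast h5
  -- pigeonhole
  obtain ⟨m₀, hfib⟩ := Finite.exists_infinite_fiber (fun k : ℕ => (⟨Mf k, hMb k⟩ : Fin (M+1)))
  have hfib' : Set.Infinite ((fun k : ℕ => (⟨Mf k, hMb k⟩ : Fin (M+1))) ⁻¹' {m₀}) :=
    Set.infinite_coe_iff.mp hfib
  have hmeq : ∀ k ∈ ((fun k : ℕ => (⟨Mf k, hMb k⟩ : Fin (M+1))) ⁻¹' {m₀}), Mf k = (m₀ : ℕ) := by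
    intro k hk
    simpa [Set.mem_preimage, Fin.ext_iff] using hk
  obtain ⟨k₀, hk₀⟩ := hfib'.nonempty
  have hm₀pos : 0 < (m₀ : ℕ) := by rw [← hmeq k₀ hk₀]; exact hMpos k₀
  have hm₀R : (0:ℝ) < ((m₀:ℕ) : ℝ) := by exact_mod_cast hm₀pos
  refine ⟨1 - (m₀:ℕ) * (1 - x), ?_, (m₀:ℕ), hm₀pos, by field_simp; ring⟩
  intro ε hε
  obtain ⟨N, hN⟩ := exists_nat_gt (((m₀:ℕ):ℝ)/ε)
  obtain ⟨k, hkmem, hkN⟩ := hfib'.exists_gt N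
  have hMfk : Mf k = (m₀ : ℕ) := hmeq k hkmem
  set y : ℝ := 1 - (1 - (L k : ℝ))/((m₀:ℕ):ℝ) with hy
  have hyk : (1 - (1 - (L k : ℝ))/(Mf k)) = y := by rw [hMfk]
  have hyne : y ≠ x := by rw [← hyk]; exact hne k
  have hylt : |y - x| < 1/(k+1:ℝ) := by
    rw [← hyk]; exact (hltk k).trans_le (min_le_right _ _)
  refine ⟨(L k : ℝ), ⟨L k, Or.inl (hL k), rfl⟩, ?_, ?_⟩
  · intro hcontra
    apply hyne
    have : (1 - (L k : ℝ)) = (m₀:ℕ) * (1 - x) := by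
      rw [hcontra]; ring
    rw [hy, this]
    field_simp
    ring
  · have hdiff : (L k : ℝ) - (1 - (m₀:ℕ) * (1 - x)) = ((m₀:ℕ):ℝ) * (y - x) := by
      rw [hy]; field_simp; ring
    rw [hdiff, abs_mul, abs_of_nonneg hm₀R.le]
    have h6 : ((m₀:ℕ):ℝ) * |y - x| < ((m₀:ℕ):ℝ) * (1/(k+1:ℝ)) := by
      exact mul_lt_mul_of_pos_left hylt hm₀R
    have h7 : ((m₀:ℕ):ℝ) * (1/(k+1:ℝ)) < ε := by
      rw [div_lt_iff₀ hε] at hN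
      have hk1 : (N:ℝ) < (k:ℝ) + 1 := by exact_mod_cast Nat.lt_succ_of_lt hkN
      have : ((m₀:ℕ):ℝ) < ε * ((k:ℝ)+1) := by nlinarith
      rw [mul_one_div, div_lt_iff₀ (by positivity : (0:ℝ) < (k:ℝ)+1)]
      linarith
    linarith

lemma accum_union_one (Λ : Set ℚ) (l' : ℝ)
    (h : IsAccumPt ((fun q : ℚ => (q : ℝ)) '' (Λ ∪ {1})) l') :
    IsAccumPt ((fun q : ℚ => (q : ℝ)) '' Λ) l' := by
  intro ε hε
  by_cases hl1 : l' = 1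
  · obtain ⟨y, hy, hne, hlt⟩ := h ε hε
    obtain ⟨q, hq, rfl⟩ := hy
    rcases hq with hq | hq
    · exact ⟨(q:ℝ), ⟨q, hq, rfl⟩, hne, hlt⟩
    · exfalso; apply hne; rw [Set.mem_singleton_iff] at hq; rw [hq, hl1]; norm_num
  · have hd : (0:ℝ) < |1 - l'| := abs_pos.mpr (sub_ne_zero.mpr (fun h => hl1 h.symm))
    obtain ⟨y, hy, hne, hlt⟩ := h (min ε |1 - l'|) (lt_min hε hd)
    obtain ⟨q, hq, rfl⟩ := hy
    rcases hq with hq | hq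
    · exact ⟨(q:ℝ), ⟨q, hq, rfl⟩, hne, hlt.trans_le (min_le_left _ _)⟩
    · exfalso
      rw [Set.mem_singleton_iff] at hq
      subst hq
      have : |(1:ℝ) - l'| < |1 - l'| := by
        have := hlt.trans_le (min_le_right _ _)
        simpa using this
      exact lt_irrefl _ this

/-- If `Λ ⊆ [0,1] ∩ ℚ` satisfies DCC, then the hyperstandard set
`H(Λ) = {1 - (1-λ)/m : λ ∈ Λ, m ∈ ℤ_{>0}} ∪ Λ` satisfies DCC, its accumulation points are
contained in `{1 - (1-λ')/m : λ' an accumulation point of Λ ∪ {1}, m > 0} ∪ {1}`, and in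
particular if `Λ` has rational accumulation points then so does `H(Λ)`. -/
theorem hyperstandard_dcc (Λ : Set ℚ) (hsub : Λ ⊆ Set.Icc 0 1) (hdcc : DCCSet Λ) :
    DCCSet ({x : ℚ | ∃ l ∈ Λ, ∃ m : ℕ, 0 < m ∧ x = 1 - (1 - l) / (m : ℚ)} ∪ Λ) ∧
    (∀ x : ℝ, IsAccumPt
        ((fun q : ℚ => (q : ℝ)) ''
          ({x : ℚ | ∃ l ∈ Λ, ∃ m : ℕ, 0 < m ∧ x = 1 - (1 - l) / (m : ℚ)} ∪ Λ)) x →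
      x = 1 ∨ ∃ l' : ℝ, IsAccumPt ((fun q : ℚ => (q : ℝ)) '' (Λ ∪ {1})) l' ∧
        ∃ m : ℕ, 0 < m ∧ x = 1 - (1 - l') / (m : ℝ)) ∧
    ((∀ x : ℝ, IsAccumPt ((fun q : ℚ => (q : ℝ)) '' Λ) x → ∃ q : ℚ, x = (q : ℝ)) →
      ∀ x : ℝ, IsAccumPt
          ((fun q : ℚ => (q : ℝ)) ''
            ({x : ℚ | ∃ l ∈ Λ, ∃ m : ℕ, 0 < m ∧ x = 1 - (1 - l) / (m : ℚ)} ∪ Λ)) x →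
        ∃ q : ℚ, x = (q : ℝ)) := by
  refine ⟨dcc_part Λ hsub hdcc, accum_part Λ hsub, ?_⟩
  intro hrat x hacc
  rcases accum_part Λ hsub x hacc with h1 | ⟨l', hl', m, hm, hx⟩
  · exact ⟨1, by rw [h1]; norm_num⟩
  · have hacc2 : IsAccumPt ((fun q : ℚ => (q : ℝ)) '' Λ) l' := accum_union_one Λ l' hl'
    obtain ⟨q, hq⟩ := hrat l' hacc2
    refine ⟨1 - (1 - q) / (m : ℚ), ?_⟩
    rw [hx, hq]
    push_cast
    ring
end
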